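/- arXiv:math/9903019 — 2 statements merged into one kernel-verified Lean document; each statement's English description precedes it below -/
import Mathlib

section
/- For positive integers l, r, n, s, and fixed i with 1 ≤ i ≤ l, and fixed positive integers r_1, ..., r_l summing to r, the sum over all compositions (μ_1, ..., μ_l) of n into positive parts of the product C(μ_1-1, r_1-1) ··· C(μ_l-1, r_l-1) · C(μ_i+s-1, s) equals (-1)^(r_i-1) · C(-s-1, r_i-1) · C(n+s-1, r+s-1). -/
open Finset

lemma vand0 (a b m : ℕ) :
    ∑ p ∈ antidiagonal m, (p.1.choose a) * (p.2.choose b)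
      = (m + 1).choose (a + b + 1) := by
  induction m generalizing b with
  | zero =>
    rw [Finset.Nat.antidiagonal_zero, Finset.sum_singleton]
    rcases Nat.eq_zero_or_pos a with ha | ha
    · rcases Nat.eq_zero_or_pos b with hb | hb
      · subst ha; subst hb; simp
      · subst ha
        rw [Nat.choose_eq_zero_of_lt (show (0:ℕ) < b by omega),
          Nat.choose_eq_zero_of_lt (show (1:ℕ) < 0 + b + 1 by omega)]
        simp
    · rw [Nat.choose_eq_zero_of_lt (show (0:ℕ) < a by omega),
        Nat.choose_eq_zero_of_lt (show (1:ℕ) < a + b + 1 by omega)]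
      simp
  | succ m ih =>
    rw [Finset.Nat.sum_antidiagonal_succ']
    rcases Nat.eq_zero_or_pos b with hb | hb
    · subst hb
      have h2 : ∀ p ∈ antidiagonal m, p.1.choose a * (p.2+1).choose 0
          = p.1.choose a * p.2.choose 0 := by intro p _; simp
      rw [Finset.sum_congr rfl h2, ih]
      simp only [Nat.choose_zero_right, mul_one, Nat.add_zero]
      rw [show m + 1 + 1 = (m+1) + 1 from rfl, show a + 1 = a + 1 from rfl,
        Nat.choose_succ_succ' (m+1) a]
    · obtain ⟨b', rfl⟩ : ∃ b', b = b' + 1 := ⟨b - 1, by omega⟩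
      rw [Nat.choose_eq_zero_of_lt (show (0:ℕ) < b'+1 by omega)]
      simp only [mul_zero, zero_add]
      have h2 : ∀ p ∈ antidiagonal m, p.1.choose a * (p.2+1).choose (b'+1)
          = p.1.choose a * p.2.choose b' + p.1.choose a * p.2.choose (b'+1) := by
        intro p _; rw [Nat.choose_succ_succ', Nat.mul_add]
      rw [Finset.sum_congr rfl h2, Finset.sum_add_distrib, ih, ih,
        show a + (b'+1) + 1 = (a + b' + 1) + 1 by ring,
        Nat.choose_succ_succ' (m+1) (a+b'+1)]

lemma shift_vand (m t u a b : ℕ) (ha : t ≤ a) (hb : u ≤ b) :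
    ∑ p ∈ antidiagonal m, ((p.1 + t).choose a) * ((p.2 + u).choose b)
      = (m + t + u + 1).choose (a + b + 1) := by
  rw [← vand0 a b (m+t+u)]
  rw [Finset.Nat.sum_antidiagonal_eq_sum_range_succ_mk,
    Finset.Nat.sum_antidiagonal_eq_sum_range_succ_mk]
  dsimp only
  rw [Finset.range_eq_Ico, Finset.range_eq_Ico]
  rw [← Finset.sum_Ico_consecutive (fun k => k.choose a * (m+t+u-k).choose b)
      (Nat.zero_le t) (show t ≤ (m+t+u).succ by omega)]
  rw [show ∑ k ∈ Finset.Ico t (m+t+u).succ, k.choose a * (m+t+u-k).choose b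
      = ∑ k ∈ Finset.Ico t (m+t+u+1), k.choose a * (m+t+u-k).choose b from rfl,
    ← Finset.sum_Ico_consecutive (fun k => k.choose a * (m+t+u-k).choose b)
      (show t ≤ m+t+1 by omega) (show m+t+1 ≤ m+t+u+1 by omega)]
  have h1 : ∑ k ∈ Finset.Ico 0 t, k.choose a * (m+t+u-k).choose b = 0 := by
    apply Finset.sum_eq_zero; intro k hk
    rw [Finset.mem_Ico] at hk
    rw [Nat.choose_eq_zero_of_lt (show k < a by omega), zero_mul]
  have h2 : ∑ k ∈ Finset.Ico (m+t+1) (m+t+u+1), k.choose a * (m+t+u-k).choose b = 0 := by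
    apply Finset.sum_eq_zero; intro k hk
    rw [Finset.mem_Ico] at hk
    rw [Nat.choose_eq_zero_of_lt (show m+t+u-k < b by omega), mul_zero]
  rw [h1, h2, zero_add, add_zero]
  conv_rhs => rw [Finset.sum_Ico_eq_sum_range]
  apply Finset.sum_congr (by rw [Finset.range_eq_Ico]; congr 1; omega)
  intro k hk
  rw [Finset.mem_range] at hk
  congr 1
  · congr 1; omega
  · congr 1; omega

lemma sum_adt_succ {M : Type*} [AddCommMonoid M] (k m : ℕ) (f : (Fin (k+1) → ℕ) → M) :
    ∑ ν ∈ Finset.Nat.antidiagonalTuple (k+1) m, f ν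
      = ∑ p ∈ antidiagonal m, ∑ w ∈ Finset.Nat.antidiagonalTuple k p.2, f (Fin.cons p.1 w) := by
  rw [← Finset.sum_sigma (antidiagonal m) (fun p => Finset.Nat.antidiagonalTuple k p.2)
    (fun x => f (Fin.cons x.1.1 x.2))]
  apply Finset.sum_nbij' (i := fun ν => (⟨(ν 0, ∑ j : Fin k, ν j.succ), Fin.tail ν⟩ :
      (_ : ℕ × ℕ) × (Fin k → ℕ)))
    (j := fun x => Fin.cons x.1.1 x.2)
  · intro ν hν
    rw [Finset.Nat.mem_antidiagonalTuple] at hν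
    rw [Finset.mem_sigma, Finset.HasAntidiagonal.mem_antidiagonal, Finset.Nat.mem_antidiagonalTuple]
    constructor
    · rw [← hν, Fin.sum_univ_succ]
    · rfl
  · intro x hx
    rw [Finset.mem_sigma, Finset.HasAntidiagonal.mem_antidiagonal, Finset.Nat.mem_antidiagonalTuple] at hx
    rw [Finset.Nat.mem_antidiagonalTuple, Fin.sum_cons, hx.2, hx.1]
  · intro ν hν
    exact Fin.cons_self_tail ν
  · intro x hx
    rw [Finset.mem_sigma, Finset.HasAntidiagonal.mem_antidiagonal, Finset.Nat.mem_antidiagonalTuple] at hx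
    refine Sigma.ext ?_ ?_
    · simp only [Fin.cons_zero]
      have : ∑ j : Fin k, (Fin.cons x.1.1 x.2 : Fin (k+1) → ℕ) j.succ = x.1.2 := by
        simp only [Fin.cons_succ]; exact hx.2
      rw [this]
    · simp only [Fin.cons_zero]
      have : Fin.tail (Fin.cons x.1.1 x.2 : Fin (k+1) → ℕ) = x.2 := Fin.tail_cons _ _
      rw [this]
  · intro ν hν
    rw [Fin.cons_self_tail]

lemma tuple_sum : ∀ (l : ℕ) (t c : Fin (l+1) → ℕ), (∀ j, t j ≤ c j) → ∀ m : ℕ,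
    ∑ ν ∈ Finset.Nat.antidiagonalTuple (l+1) m, ∏ j, ((ν j + t j).choose (c j))
      = (m + (∑ j, t j) + l).choose ((∑ j, c j) + l) := by
  intro l
  induction l with
  | zero =>
    intro t c htc m
    rw [Finset.Nat.antidiagonalTuple_one, Finset.sum_singleton]
    simp
  | succ l ih =>
    intro t c htc m
    rw [sum_adt_succ]
    have key : ∀ p ∈ antidiagonal m, (∑ w ∈ Finset.Nat.antidiagonalTuple (l+1) p.2,
        ∏ j, ((Fin.cons p.1 w : Fin (l+2) → ℕ) j + t j).choose (c j))
        = (p.1 + t 0).choose (c 0) *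
          ((p.2 + ((∑ j : Fin (l+1), t j.succ) + l)).choose ((∑ j : Fin (l+1), c j.succ) + l)) := by
      intro p _
      have hw : ∀ w : Fin (l+1) → ℕ,
          ∏ j : Fin (l+2), ((Fin.cons p.1 w : Fin (l+2) → ℕ) j + t j).choose (c j)
          = (p.1 + t 0).choose (c 0) * ∏ j : Fin (l+1), ((w j + t j.succ).choose (c j.succ)) := by
        intro w
        rw [Fin.prod_univ_succ]
        simp only [Fin.cons_zero, Fin.cons_succ]
      rw [Finset.sum_congr rfl (fun w _ => hw w), ← Finset.mul_sum,
        ih (fun j => t j.succ) (fun j => c j.succ) (fun j => htc j.succ) p.2]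
      congr 2 <;> omega
    rw [Finset.sum_congr rfl key,
      shift_vand m (t 0) ((∑ j : Fin (l+1), t j.succ) + l) (c 0)
        ((∑ j : Fin (l+1), c j.succ) + l) (htc 0)
        (by
          have : (∑ j : Fin (l+1), t j.succ) ≤ (∑ j : Fin (l+1), c j.succ) :=
            Finset.sum_le_sum (fun j _ => htc j.succ)
          omega),
      Fin.sum_univ_succ t, Fin.sum_univ_succ c]
    congr 1 <;> omega

lemma trinom (v s k : ℕ) :
    v.choose k * (v + s).choose s = (s + k).choose k * (v + s).choose (s + k) := by
  rcases le_or_gt k v with h | h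
  · have e1 : v.choose k * k.factorial * (v - k).factorial = v.factorial :=
      Nat.choose_mul_factorial_mul_factorial h
    have e2 : (v+s).choose s * s.factorial * v.factorial = (v+s).factorial := by
      have h2 := Nat.choose_mul_factorial_mul_factorial (show s ≤ v + s by omega)
      rwa [show v + s - s = v by omega] at h2
    have e3 : (s+k).choose k * k.factorial * s.factorial = (s+k).factorial := by
      have h3 := Nat.choose_mul_factorial_mul_factorial (show k ≤ s + k by omega)
      rwa [show s + k - k = s by omega] at h3
    have e4 : (v+s).choose (s+k) * (s+k).factorial * (v - k).factorial = (v+s).factorial := by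
      have h4 := Nat.choose_mul_factorial_mul_factorial (show s + k ≤ v + s by omega)
      rwa [show v + s - (s+k) = v - k by omega] at h4
    apply Nat.eq_of_mul_eq_mul_right
      (show 0 < k.factorial * (v-k).factorial * s.factorial * v.factorial by positivity)
    calc v.choose k * (v + s).choose s *
          (k.factorial * (v-k).factorial * s.factorial * v.factorial)
        = (v.choose k * k.factorial * (v - k).factorial) *
            ((v+s).choose s * s.factorial * v.factorial) := by ring
      _ = v.factorial * (v+s).factorial := by rw [e1, e2]
      _ = ((v+s).choose (s+k) * (s+k).factorial * (v - k).factorial) * v.factorial := by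
          rw [e4]; ring
      _ = ((v+s).choose (s+k) * ((s+k).choose k * k.factorial * s.factorial) *
            (v - k).factorial) * v.factorial := by rw [e3]
      _ = (s + k).choose k * (v + s).choose (s + k) *
            (k.factorial * (v-k).factorial * s.factorial * v.factorial) := by ring
  · rw [Nat.choose_eq_zero_of_lt h,
      Nat.choose_eq_zero_of_lt (show v + s < s + k by omega), zero_mul, mul_zero]

/-- The generalized binomial coefficient `C(x, k) = x(x-1)⋯(x-k+1)/k!` for rational `x`. -/
def gchoose (x : ℚ) (k : ℕ) : ℚ := (∏ i ∈ Finset.range k, (x - i)) / (Nat.factorial k)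

lemma prod_cast_fact (s k : ℕ) :
    ∏ i ∈ Finset.range k, ((s:ℚ)+1+i) = (s+k).factorial / s.factorial := by
  induction k with
  | zero => simp [div_self (Nat.cast_ne_zero.mpr (s.factorial_pos).ne' : ((s.factorial:ℚ) ≠ 0))]
  | succ k ih =>
    rw [Finset.prod_range_succ, ih, show s + (k+1) = (s+k)+1 by omega, Nat.factorial_succ]
    have hs : ((s.factorial : ℚ)) ≠ 0 := Nat.cast_ne_zero.mpr (s.factorial_pos).ne'
    field_simp
    push_cast
    ring

lemma gchoose_neg (s k : ℕ) :
    (-1:ℚ)^k * gchoose (-(s:ℚ)-1) k = ((s+k).choose k : ℚ) := by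
  unfold gchoose
  have h1 : ∏ i ∈ Finset.range k, ((-(s:ℚ)-1) - (i:ℕ))
      = (-1:ℚ)^k * ∏ i ∈ Finset.range k, ((s:ℚ)+1+i) := by
    rw [Finset.prod_congr rfl (fun i _ => show (-(s:ℚ)-1-(i:ℕ)) = (-1) * ((s:ℚ)+1+i) by
      push_cast; ring), Finset.prod_mul_distrib, Finset.prod_const, Finset.card_range]
  have h3 : ((-1:ℚ)^k) * ((-1:ℚ)^k) = 1 := by rw [← mul_pow]; norm_num
  rw [h1, prod_cast_fact, Nat.cast_choose ℚ (show k ≤ s+k by omega),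
    show s + k - k = s by omega]
  have hk : ((k.factorial : ℚ)) ≠ 0 := Nat.cast_ne_zero.mpr (k.factorial_pos).ne'
  have hs : ((s.factorial : ℚ)) ≠ 0 := Nat.cast_ne_zero.mpr (s.factorial_pos).ne'
  calc (-1:ℚ)^k * ((-1:ℚ)^k * ((((s+k).factorial : ℚ)) / (s.factorial : ℚ)) / (k.factorial : ℚ))
      = ((-1:ℚ)^k * (-1:ℚ)^k) * ((((s+k).factorial : ℚ)) / ((s.factorial : ℚ) * (k.factorial:ℚ))) := by
        ring
    _ = (((s+k).factorial : ℚ)) / ((k.factorial : ℚ) * (s.factorial:ℚ)) := by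
        rw [h3, one_mul, mul_comm ((s.factorial : ℚ))]

theorem stmt2 (l n s rtot : ℕ) (hl : 1 ≤ l) (hn : 1 ≤ n) (hs : 1 ≤ s) (hr : 1 ≤ rtot)
    (r : Fin l → ℕ) (hrpos : ∀ j, 1 ≤ r j) (hrsum : ∑ j, r j = rtot) (i : Fin l) :
    (∑ μ ∈ (Finset.Nat.antidiagonalTuple l n).filter (fun μ => ∀ j, 1 ≤ μ j),
        ((∏ j, ((μ j - 1).choose (r j - 1) : ℚ)) * ((μ i + s - 1).choose s : ℚ))) =
      (-1 : ℚ) ^ (r i - 1) * gchoose (-(s : ℚ) - 1) (r i - 1) *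
        ((n + s - 1).choose (rtot + s - 1) : ℚ) := by
  obtain ⟨l', rfl⟩ : ∃ l', l = l' + 1 := ⟨l - 1, by omega⟩
  rw [gchoose_neg s (r i - 1)]
  have hrl : l' + 1 ≤ rtot := by
    rw [← hrsum]
    calc l' + 1 = ∑ _j : Fin (l'+1), 1 := by simp
      _ ≤ ∑ j, r j := Finset.sum_le_sum fun j _ => hrpos j
  by_cases hnl : n < l' + 1
  · have hempty : (Finset.Nat.antidiagonalTuple (l'+1) n).filter (fun μ => ∀ j, 1 ≤ μ j)
        = ∅ := by
      rw [Finset.filter_eq_empty_iff]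
      intro μ hμ
      rw [Finset.Nat.mem_antidiagonalTuple] at hμ
      intro hpos
      have : l' + 1 ≤ n := by
        rw [← hμ]
        calc l' + 1 = ∑ _j : Fin (l'+1), 1 := by simp
          _ ≤ ∑ j, μ j := Finset.sum_le_sum fun j _ => hpos j
      omega
    rw [hempty, Finset.sum_empty,
      Nat.choose_eq_zero_of_lt (show n + s - 1 < rtot + s - 1 by omega)]
    simp
  · push_neg at hnl
    set m := n - (l' + 1) with hm
    set t : Fin (l'+1) → ℕ := fun j => if j = i then s else 0 with ht
    set c : Fin (l'+1) → ℕ := fun j => (r j - 1) + t j with hc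
    have htc : ∀ j, t j ≤ c j := fun j => by simp [hc]
    -- Step 1: bijection μ ↦ ν = μ - 1
    have step1 : (∑ μ ∈ (Finset.Nat.antidiagonalTuple (l'+1) n).filter (fun μ => ∀ j, 1 ≤ μ j),
          ((∏ j, ((μ j - 1).choose (r j - 1) : ℚ)) * ((μ i + s - 1).choose s : ℚ)))
        = ∑ ν ∈ Finset.Nat.antidiagonalTuple (l'+1) m,
            ((∏ j, ((ν j).choose (r j - 1) : ℚ)) * ((ν i + s).choose s : ℚ)) := by
      apply Finset.sum_nbij' (i := fun μ => fun j => μ j - 1) (j := fun ν => fun j => ν j + 1)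
      · intro μ hμ
        rw [Finset.mem_filter, Finset.Nat.mem_antidiagonalTuple] at hμ
        rw [Finset.Nat.mem_antidiagonalTuple]
        have h2 : ∑ j, (μ j - 1 + 1) = ∑ j, μ j :=
          Finset.sum_congr rfl fun j _ => by have := hμ.2 j; omega
        rw [Finset.sum_add_distrib] at h2
        simp only [Finset.sum_const, Finset.card_univ, Fintype.card_fin, smul_eq_mul,
          mul_one] at h2
        omega
      · intro ν hν
        rw [Finset.Nat.mem_antidiagonalTuple] at hν
        rw [Finset.mem_filter, Finset.Nat.mem_antidiagonalTuple]
        constructor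
        · rw [Finset.sum_add_distrib, hν]
          simp only [Finset.sum_const, Finset.card_univ, Fintype.card_fin, smul_eq_mul,
            mul_one]
          omega
        · intro j; exact Nat.le_add_left 1 (ν j)
      · intro μ hμ
        rw [Finset.mem_filter] at hμ
        funext j
        show μ j - 1 + 1 = μ j
        have := hμ.2 j
        omega
      · intro ν _
        funext j
        show ν j + 1 - 1 = ν j
        omega
      · intro μ hμ
        rw [Finset.mem_filter] at hμ
        have hi1 := hμ.2 i
        beta_reduce
        rw [show μ i - 1 + s = μ i + s - 1 by omega]
    rw [step1]
    -- Step 2: pointwise trinomial rewrite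
    have step2 : ∀ ν : Fin (l'+1) → ℕ,
        ((∏ j, ((ν j).choose (r j - 1) : ℚ)) * ((ν i + s).choose s : ℚ))
        = ((s + (r i - 1)).choose (r i - 1) : ℚ) * ((∏ j, (ν j + t j).choose (c j) : ℕ) : ℚ) := by
      intro ν
      have hnat : (∏ j, (ν j).choose (r j - 1)) * (ν i + s).choose s
          = (s + (r i - 1)).choose (r i - 1) * ∏ j, (ν j + t j).choose (c j) := by
        rw [← Finset.mul_prod_erase Finset.univ (fun j => (ν j).choose (r j - 1))
            (Finset.mem_univ i),
          ← Finset.mul_prod_erase Finset.univ (fun j => (ν j + t j).choose (c j))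
            (Finset.mem_univ i)]
        have herase : ∏ j ∈ Finset.univ.erase i, (ν j + t j).choose (c j)
            = ∏ j ∈ Finset.univ.erase i, (ν j).choose (r j - 1) := by
          apply Finset.prod_congr rfl
          intro j hj
          have hji : j ≠ i := (Finset.mem_erase.mp hj).1
          simp [ht, hc, hji]
        rw [herase]
        have hti : t i = s := by simp [ht]
        have hci : c i = (r i - 1) + s := by simp [hc, ht]
        rw [hti, hci]
        have htri := trinom (ν i) s (r i - 1)
        rw [show (r i - 1) + s = s + (r i - 1) by omega]
        calc (ν i).choose (r i - 1) * (∏ j ∈ Finset.univ.erase i, (ν j).choose (r j - 1))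
              * (ν i + s).choose s
            = ((ν i).choose (r i - 1) * (ν i + s).choose s)
              * ∏ j ∈ Finset.univ.erase i, (ν j).choose (r j - 1) := by ring
          _ = ((s + (r i - 1)).choose (r i - 1) * (ν i + s).choose (s + (r i - 1)))
              * ∏ j ∈ Finset.univ.erase i, (ν j).choose (r j - 1) := by rw [htri]
          _ = (s + (r i - 1)).choose (r i - 1) * ((ν i + s).choose (s + (r i - 1))
              * ∏ j ∈ Finset.univ.erase i, (ν j).choose (r j - 1)) := by ring
      calc ((∏ j, ((ν j).choose (r j - 1) : ℚ)) * ((ν i + s).choose s : ℚ))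
          = (((∏ j, (ν j).choose (r j - 1)) * (ν i + s).choose s : ℕ) : ℚ) := by push_cast; ring
        _ = (((s + (r i - 1)).choose (r i - 1) * ∏ j, (ν j + t j).choose (c j) : ℕ) : ℚ) := by
            rw [hnat]
        _ = ((s + (r i - 1)).choose (r i - 1) : ℚ) *
            ((∏ j, (ν j + t j).choose (c j) : ℕ) : ℚ) := by push_cast; ring
    rw [Finset.sum_congr rfl (fun ν _ => step2 ν), ← Finset.mul_sum]
    have step3 : ∑ ν ∈ Finset.Nat.antidiagonalTuple (l'+1) m,
        ((∏ j, (ν j + t j).choose (c j) : ℕ) : ℚ)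
        = (((m + (∑ j, t j) + l').choose ((∑ j, c j) + l') : ℕ) : ℚ) := by
      rw [← Nat.cast_sum, tuple_sum l' t c htc m]
    rw [step3]
    have hsumt : ∑ j, t j = s := by
      rw [ht]
      simp
    have hsumc : (∑ j, c j) + l' = rtot + s - 1 := by
      rw [hc]
      simp only
      rw [Finset.sum_add_distrib, hsumt]
      have h4 : ∑ j, (r j - 1) = rtot - (l' + 1) := by
        have h5 : ∑ j, (r j - 1 + 1) = ∑ j, r j :=
          Finset.sum_congr rfl fun j _ => by have := hrpos j; omega
        rw [Finset.sum_add_distrib] at h5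
        simp only [Finset.sum_const, Finset.card_univ, Fintype.card_fin, smul_eq_mul,
          mul_one] at h5
        omega
      omega
    rw [hsumt, hsumc, show m + s + l' = n + s - 1 by omega]
end

section
/- For positive integers r and s, and an indeterminate X, the identity ∑_{l=1}^{r} (X^(l-1)/l!) · ∑_{r_1+...+r_l=r, r_j≥1} (1/(r_1···r_l)) · ∑_{i=1}^{l} (-1)^(r_i-1) · C(-s-1, r_i-1) = (1/s) · [C(X+r+s-1, r) - C(X+r-1, r)] holds as an identity of polynomials in X (equivalently, for all real X). -/
/-- The generalized binomial coefficient `C(x, k) = x(x-1)⋯(x-k+1)/k!` for real `x`. -/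
noncomputable def gchooseR (x : ℝ) (k : ℕ) : ℝ := (∏ i ∈ Finset.range k, (x - i)) / (Nat.factorial k)

noncomputable def gc (x : ℝ) (n : ℕ) : ℝ := (∏ i ∈ Finset.range n, (x + i)) / (Nat.factorial n)

lemma neg_one_pow_gchooseR (y : ℝ) (k : ℕ) : (-1:ℝ)^k * gchooseR (-y) k = gc y k := by
  rw [gchooseR, gc]
  have : ∏ i ∈ Finset.range k, (y + (i:ℝ)) = ∏ i ∈ Finset.range k, ((-1) * (-y - i)) := by
    refine Finset.prod_congr rfl fun i _ => by ring
  rw [this, Finset.prod_mul_distrib, Finset.prod_const, Finset.card_range]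
  ring

lemma gchooseR_eq_gc (y : ℝ) (n : ℕ) : gchooseR (y + n - 1) n = gc y n := by
  rw [gchooseR, gc]
  congr 1
  rw [← Finset.prod_range_reflect (fun j => y + (j:ℝ)) n]
  refine Finset.prod_congr rfl fun j hj => ?_
  rw [Finset.mem_range] at hj
  have h1 : j ≤ n - 1 := by omega
  have h2 : 1 ≤ n := by omega
  rw [Nat.cast_sub h1, Nat.cast_sub h2]
  push_cast
  ring

lemma gc_shift (x : ℝ) (m : ℕ) : x * gc (x+1) m = ((m:ℝ)+1) * gc x (m+1) := by
  rw [gc, gc, Finset.prod_range_succ', Nat.factorial_succ]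
  have : ∏ i ∈ Finset.range m, (x + ((i:ℝ)+1)) = ∏ i ∈ Finset.range m, (x + 1 + i) := by
    refine Finset.prod_congr rfl fun i _ => by push_cast; ring
  push_cast
  rw [this]
  have hm : ((m:ℝ)+1) ≠ 0 := by positivity
  have hf : ((Nat.factorial m : ℝ)) ≠ 0 := by positivity
  field_simp
  ring

lemma gc_zero (x : ℝ) : gc x 0 = 1 := by simp [gc]

lemma gc_rec (x : ℝ) (n : ℕ) : ((n:ℝ) + 1) * gc x (n+1) = (x + n) * gc x n := by
  simp only [gc, Finset.prod_range_succ, Nat.factorial_succ]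
  push_cast
  field_simp

lemma gc_unique (x : ℝ) (f : ℕ → ℝ) (h0 : f 0 = 1)
    (hrec : ∀ n : ℕ, ((n:ℝ) + 1) * f (n+1) = (x + n) * f n) : ∀ n, f n = gc x n := by
  intro n
  induction n with
  | zero => simp [h0, gc_zero]
  | succ n ih =>
    have h1 : ((n:ℝ)+1) ≠ 0 := by positivity
    have := hrec n
    have h2 := gc_rec x n
    rw [ih] at this
    exact mul_left_cancel₀ h1 (this.trans h2.symm)

/-- Vandermonde-type convolution for `gc`. -/
lemma gc_vandermonde (x y : ℝ) : ∀ n : ℕ,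
    ∑ pq ∈ Finset.HasAntidiagonal.antidiagonal n, gc x pq.1 * gc y pq.2 = gc (x+y) n := by
  apply gc_unique
  · simp [gc_zero]
  · intro (n : ℕ)
    have key : ∀ pq ∈ Finset.HasAntidiagonal.antidiagonal (n+1), ((n:ℝ)+1) * (gc x pq.1 * gc y pq.2)
        = (pq.1 : ℝ) * (gc x pq.1 * gc y pq.2) + (pq.2 : ℝ) * (gc x pq.1 * gc y pq.2) := by
      intro pq hpq
      rw [Finset.HasAntidiagonal.mem_antidiagonal] at hpq
      have : ((pq.1 : ℝ) + pq.2) = (n:ℝ) + 1 := by exact_mod_cast congrArg Nat.cast hpq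
      rw [← this]; ring
    rw [Finset.mul_sum, Finset.sum_congr rfl key, Finset.sum_add_distrib]
    have e1 : ∑ pq ∈ Finset.HasAntidiagonal.antidiagonal (n+1), (pq.1 : ℝ) * (gc x pq.1 * gc y pq.2)
        = ∑ pq ∈ Finset.HasAntidiagonal.antidiagonal n, (x + pq.1) * (gc x pq.1 * gc y pq.2) := by
      rw [Finset.Nat.antidiagonal_succ, Finset.sum_cons, Finset.sum_map]
      simp only [Function.Embedding.coeFn_mk, Function.Embedding.prodMap, Function.Embedding.refl_apply,
        Prod.map_fst, Prod.map_snd, Nat.succ_eq_add_one, id_eq]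
      rw [Nat.cast_zero, zero_mul, zero_add]
      refine Finset.sum_congr rfl fun pq hpq => ?_
      have := gc_rec x pq.1
      push_cast
      rw [show ((pq.1:ℝ)+1) * (gc x (pq.1+1) * gc y pq.2) = (((pq.1:ℝ)+1) * gc x (pq.1+1)) * gc y pq.2 by ring,
        this]
      ring
    have e2 : ∑ pq ∈ Finset.HasAntidiagonal.antidiagonal (n+1), (pq.2 : ℝ) * (gc x pq.1 * gc y pq.2)
        = ∑ pq ∈ Finset.HasAntidiagonal.antidiagonal n, (y + pq.2) * (gc x pq.1 * gc y pq.2) := by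
      rw [Finset.Nat.antidiagonal_succ', Finset.sum_cons, Finset.sum_map]
      simp only [Function.Embedding.coeFn_mk, Function.Embedding.prodMap, Function.Embedding.refl_apply,
        Prod.map_fst, Prod.map_snd, Nat.succ_eq_add_one, id_eq]
      rw [Nat.cast_zero, zero_mul, zero_add]
      refine Finset.sum_congr rfl fun pq hpq => ?_
      have := gc_rec y pq.2
      push_cast
      rw [show ((pq.2:ℝ)+1) * (gc x pq.1 * gc y (pq.2+1)) = (((pq.2:ℝ)+1) * gc y (pq.2+1)) * gc x pq.1 by ring,
        this]
      ring
    rw [e1, e2, Finset.mul_sum, ← Finset.sum_add_distrib]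
    refine Finset.sum_congr rfl fun pq hpq => ?_
    have hc : (pq.1:ℝ) + pq.2 = n := by exact_mod_cast Finset.HasAntidiagonal.mem_antidiagonal.mp hpq
    linear_combination gc x pq.1 * gc y pq.2 * hc

noncomputable def Aps : PowerSeries ℝ := PowerSeries.mk (fun m => (m:ℝ)⁻¹)

lemma dAps : PowerSeries.derivative ℝ Aps = PowerSeries.mk (fun _ => (1:ℝ)) := by
  ext n
  rw [PowerSeries.coeff_derivative, Aps, PowerSeries.coeff_mk, PowerSeries.coeff_mk]
  push_cast
  rw [inv_mul_cancel₀ (by positivity)]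

lemma one_sub_X_mul_mk_one : ((1 : PowerSeries ℝ) - PowerSeries.X) * PowerSeries.mk (fun _ => (1:ℝ)) = 1 := by
  ext n
  rw [sub_mul, one_mul, map_sub]
  cases n with
  | zero => simp
  | succ n => simp [PowerSeries.coeff_succ_X_mul, PowerSeries.coeff_mk, PowerSeries.coeff_one]

lemma Aps_eq_X_mul : Aps = PowerSeries.X * PowerSeries.mk (fun m => ((m:ℝ)+1)⁻¹) := by
  ext n
  cases n with
  | zero => simp [Aps]
  | succ n => rw [PowerSeries.coeff_succ_X_mul] ; simp [Aps]

lemma coeff_Aps_pow_eq_zero {n k : ℕ} (h : n < k) : PowerSeries.coeff (R := ℝ) n (Aps ^ k) = 0 := by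
  rw [Aps_eq_X_mul, mul_pow, mul_comm, PowerSeries.coeff_mul_X_pow']
  rw [if_neg (by omega)]

lemma crec (k n : ℕ) : ((n:ℝ)+1) * PowerSeries.coeff (R := ℝ) (n+1) (Aps^k)
    = n * PowerSeries.coeff (R := ℝ) n (Aps^k) + k * PowerSeries.coeff (R := ℝ) n (Aps^(k-1)) := by
  cases k with
  | zero =>
    simp only [pow_zero, Nat.cast_zero, zero_mul, add_zero]
    cases n with
    | zero => simp
    | succ n => simp [PowerSeries.coeff_one]
  | succ k =>
    have hD : ((1 : PowerSeries ℝ) - PowerSeries.X) * PowerSeries.derivative ℝ (Aps^(k+1))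
        = ((k:ℝ)+1) • Aps ^ k := by
      rw [Derivation.leibniz_pow, dAps, Nat.add_sub_cancel, smul_eq_mul,
        ← Nat.cast_smul_eq_nsmul ℝ, mul_smul_comm, mul_left_comm, one_sub_X_mul_mk_one, mul_one]
      norm_cast
    have h := congrArg (PowerSeries.coeff (R := ℝ) n) hD
    rw [sub_mul, one_mul, map_sub, map_smul] at h
    cases n with
    | zero =>
      rw [PowerSeries.coeff_zero_X_mul, PowerSeries.coeff_derivative, smul_eq_mul] at h
      push_cast at h ⊢
      linarith [h]
    | succ m =>
      rw [PowerSeries.coeff_succ_X_mul, PowerSeries.coeff_derivative, PowerSeries.coeff_derivative, smul_eq_mul] at h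
      push_cast at h ⊢
      linarith [h]

lemma coeff_prod_mk {k : ℕ} (n : ℕ) (f : Fin k → ℕ → ℝ) :
    PowerSeries.coeff (R := ℝ) n (∏ j, PowerSeries.mk (f j)) =
      ∑ rv ∈ Finset.Nat.antidiagonalTuple k n, ∏ j, f j (rv j) := by
  rw [PowerSeries.coeff_prod]
  refine Finset.sum_nbij' (i := fun l => (l : Fin k → ℕ)) (j := fun rv => Finsupp.equivFunOnFinite.symm rv)
    ?_ ?_ ?_ ?_ ?_
  · intro l hl
    rw [Finset.mem_finsuppAntidiag] at hl
    rw [Finset.Nat.mem_antidiagonalTuple, ← hl.1]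
  · intro rv hrv
    rw [Finset.Nat.mem_antidiagonalTuple] at hrv
    rw [Finset.mem_finsuppAntidiag]
    exact ⟨hrv ▸ rfl, Finset.subset_univ _⟩
  · intro l _ ; exact Finsupp.equivFunOnFinite.symm_apply_apply l
  · intro rv _ ; rfl
  · intro l _
    exact Finset.prod_congr rfl fun j _ => (PowerSeries.coeff_mk _ _)

lemma Psum (X : ℝ) : ∀ n : ℕ, ∑ k ∈ Finset.range (n+1),
    X^k / (Nat.factorial k : ℝ) * PowerSeries.coeff (R := ℝ) n (Aps^k) = gc X n := by
  apply gc_unique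
  · simp
  · intro n
    have step : ∀ k ∈ Finset.range (n+2),
        ((n:ℝ)+1) * (X^k / (Nat.factorial k : ℝ) * PowerSeries.coeff (R := ℝ) (n+1) (Aps^k)) =
        (n:ℝ) * (X^k / (Nat.factorial k : ℝ) * PowerSeries.coeff (R := ℝ) n (Aps^k)) +
          X^k / (Nat.factorial k : ℝ) * ((k:ℝ) * PowerSeries.coeff (R := ℝ) n (Aps^(k-1))) := by
      intro k _
      linear_combination (X^k / (Nat.factorial k : ℝ)) * crec k n
    rw [Finset.mul_sum, Finset.sum_congr rfl step, Finset.sum_add_distrib]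
    have e1 : ∑ k ∈ Finset.range (n+2),
        (n:ℝ) * (X^k / (Nat.factorial k : ℝ) * PowerSeries.coeff (R := ℝ) n (Aps^k)) =
        (n:ℝ) * ∑ k ∈ Finset.range (n+1), X^k / (Nat.factorial k : ℝ) * PowerSeries.coeff (R := ℝ) n (Aps^k) := by
      rw [← Finset.mul_sum, Finset.sum_range_succ, coeff_Aps_pow_eq_zero (Nat.lt_succ_self n)]
      simp
    have e2 : ∑ k ∈ Finset.range (n+2),
        X^k / (Nat.factorial k : ℝ) * ((k:ℝ) * PowerSeries.coeff (R := ℝ) n (Aps^(k-1))) =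
        X * ∑ k ∈ Finset.range (n+1), X^k / (Nat.factorial k : ℝ) * PowerSeries.coeff (R := ℝ) n (Aps^k) := by
      rw [Finset.sum_range_succ', Finset.mul_sum]
      simp only [Nat.cast_zero, zero_mul, mul_zero, pow_zero, add_zero, Nat.add_sub_cancel]
      refine Finset.sum_congr rfl fun k _ => ?_
      have hk : ((k:ℝ)+1) ≠ 0 := by positivity
      have hf : ((Nat.factorial k : ℝ)) ≠ 0 := by positivity
      rw [Nat.factorial_succ]
      push_cast
      field_simp
      ring
    rw [e1, e2]
    ring

lemma b_eq (s : ℕ) (hs : 1 ≤ s) (m : ℕ) :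
    ((m:ℝ))⁻¹ * ((-1:ℝ)^(m-1) * gchooseR (-(s:ℝ)-1) (m-1)) =
      if m = 0 then 0 else gc s m / s := by
  cases m with
  | zero => simp
  | succ μ =>
    rw [if_neg (Nat.succ_ne_zero μ)]
    have h1 : (-(s:ℝ)-1) = -((s:ℝ)+1) := by ring
    rw [Nat.succ_sub_one, h1, neg_one_pow_gchooseR ((s:ℝ)+1) μ]
    have h2 := gc_shift (s:ℝ) μ
    have hs' : (s:ℝ) ≠ 0 := by positivity
    have hμ : ((μ:ℝ)+1) ≠ 0 := by positivity
    push_cast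
    field_simp
    linear_combination h2

theorem stmt3 (r s : ℕ) (hr : 1 ≤ r) (hs : 1 ≤ s) (X : ℝ) :
    (∑ l ∈ Finset.Icc 1 r, (X ^ (l - 1) / (Nat.factorial l : ℝ)) *
        ∑ rv ∈ (Finset.Nat.antidiagonalTuple l r).filter (fun rv => ∀ j, 1 ≤ rv j),
          (1 / ∏ j, (rv j : ℝ)) *
            ∑ i, (-1 : ℝ) ^ (rv i - 1) * gchooseR (-(s : ℝ) - 1) (rv i - 1)) =
      (1 / (s : ℝ)) * (gchooseR (X + r + s - 1) r - gchooseR (X + r - 1) r) := by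
  have hs' : (s:ℝ) ≠ 0 := by positivity
  set a : ℕ → ℝ := fun m => (m:ℝ)⁻¹ with ha
  set b : ℕ → ℝ := fun m => (m:ℝ)⁻¹ * ((-1:ℝ)^(m-1) * gchooseR (-(s:ℝ)-1) (m-1)) with hb
  -- Step 1: inner sum is l * coeff_r (B * A^(l-1))
  have inner : ∀ l : ℕ, 1 ≤ l →
      (∑ rv ∈ (Finset.Nat.antidiagonalTuple l r).filter (fun rv => ∀ j, 1 ≤ rv j),
          (1 / ∏ j, (rv j : ℝ)) *
            ∑ i, (-1 : ℝ) ^ (rv i - 1) * gchooseR (-(s : ℝ) - 1) (rv i - 1))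
      = (l:ℝ) * PowerSeries.coeff (R := ℝ) r (PowerSeries.mk b * Aps ^ (l-1)) := by
    intro l hl
    rw [Finset.sum_filter_of_ne (fun rv _ hne => by
      by_contra hc
      push_neg at hc
      obtain ⟨j, hj⟩ := hc
      have hj0 : rv j = 0 := by omega
      have : ∏ j, (rv j:ℝ) = 0 :=
        Finset.prod_eq_zero (Finset.mem_univ j) (by rw [hj0]; norm_num)
      rw [this] at hne
      simp at hne)]
    have term_eq : ∀ rv : Fin l → ℕ,
        (1 / ∏ j, (rv j : ℝ)) * ∑ i, (-1 : ℝ) ^ (rv i - 1) * gchooseR (-(s : ℝ) - 1) (rv i - 1)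
        = ∑ i, ∏ j, (if j = i then b (rv j) else a (rv j)) := by
      intro rv
      rw [one_div, ← Finset.prod_inv_distrib, Finset.mul_sum]
      refine Finset.sum_congr rfl fun i _ => ?_
      rw [← Finset.mul_prod_erase Finset.univ (fun j => (rv j:ℝ)⁻¹) (Finset.mem_univ i),
        ← Finset.mul_prod_erase Finset.univ (fun j => if j = i then b (rv j) else a (rv j))
          (Finset.mem_univ i), if_pos rfl]
      rw [Finset.prod_congr rfl (fun j hj => if_neg (Finset.ne_of_mem_erase hj) :
        ∀ j ∈ Finset.univ.erase i, (if j = i then b (rv j) else a (rv j)) = a (rv j))]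
      simp only [hb, ha]
      ring
    rw [Finset.sum_congr rfl fun rv _ => term_eq rv, Finset.sum_comm]
    have prod_eq : ∀ i : Fin l,
        (∑ rv ∈ Finset.Nat.antidiagonalTuple l r, ∏ j, (if j = i then b (rv j) else a (rv j)))
        = PowerSeries.coeff (R := ℝ) r (PowerSeries.mk b * Aps ^ (l-1)) := by
      intro i
      rw [← coeff_prod_mk r (fun j m => if j = i then b m else a m)]
      congr 1
      have series_eq : ∀ j : Fin l,
          PowerSeries.mk (fun m => if j = i then b m else a m)
          = if j = i then PowerSeries.mk b else Aps := by
        intro j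
        split_ifs with h
        · simp [h]
        · simp [h, Aps, ha]
      rw [Finset.prod_congr rfl fun j _ => series_eq j,
        ← Finset.mul_prod_erase Finset.univ _ (Finset.mem_univ i), if_pos rfl,
        Finset.prod_congr rfl (fun j hj => if_neg (Finset.ne_of_mem_erase hj) :
          ∀ j ∈ Finset.univ.erase i, (if j = i then PowerSeries.mk b else Aps) = Aps),
        Finset.prod_const, Finset.card_erase_of_mem (Finset.mem_univ i), Finset.card_univ,
        Fintype.card_fin]
    rw [Finset.sum_congr rfl fun i _ => prod_eq i, Finset.sum_const, Finset.card_univ,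
      Fintype.card_fin, nsmul_eq_mul]
  have main1 : (∑ l ∈ Finset.Icc 1 r, (X ^ (l - 1) / (Nat.factorial l : ℝ)) *
        ∑ rv ∈ (Finset.Nat.antidiagonalTuple l r).filter (fun rv => ∀ j, 1 ≤ rv j),
          (1 / ∏ j, (rv j : ℝ)) *
            ∑ i, (-1 : ℝ) ^ (rv i - 1) * gchooseR (-(s : ℝ) - 1) (rv i - 1))
      = ∑ k ∈ Finset.range r,
          X ^ k / (Nat.factorial k : ℝ) * PowerSeries.coeff (R := ℝ) r (PowerSeries.mk b * Aps ^ k) := by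
    rw [Finset.sum_congr rfl fun l hl => by
      rw [inner l (Finset.mem_Icc.mp hl).1]]
    refine Finset.sum_nbij' (i := fun l => l - 1) (j := fun k => k + 1) ?_ ?_ ?_ ?_ ?_
    · intro l hl
      rw [Finset.mem_Icc] at hl
      rw [Finset.mem_range]
      omega
    · intro k hk
      rw [Finset.mem_range] at hk
      rw [Finset.mem_Icc]
      omega
    · intro l hl
      rw [Finset.mem_Icc] at hl
      omega
    · intro k _
      omega
    · intro l hl
      rw [Finset.mem_Icc] at hl
      obtain ⟨m, rfl⟩ : ∃ m, l = m + 1 := ⟨l - 1, by omega⟩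
      simp only [Nat.add_sub_cancel, Nat.factorial_succ]
      have h1 : ((m:ℝ)+1) ≠ 0 := by positivity
      have h2 : ((Nat.factorial m : ℝ)) ≠ 0 := by positivity
      push_cast
      field_simp
  rw [main1]
  -- extend to range (r+1)
  have last0 : PowerSeries.coeff (R := ℝ) r (PowerSeries.mk b * Aps ^ r) = 0 := by
    rw [PowerSeries.coeff_mul]
    refine Finset.sum_eq_zero fun pq hpq => ?_
    have hmem := Finset.HasAntidiagonal.mem_antidiagonal.mp hpq
    rcases Nat.lt_or_ge pq.2 r with h | h
    · rw [coeff_Aps_pow_eq_zero h, mul_zero]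
    · have h1 : pq.1 = 0 := by omega
      rw [PowerSeries.coeff_mk, h1]
      simp [hb]
  have ext1 : (∑ k ∈ Finset.range r,
        X ^ k / (Nat.factorial k : ℝ) * PowerSeries.coeff (R := ℝ) r (PowerSeries.mk b * Aps ^ k))
      = ∑ k ∈ Finset.range (r+1),
        X ^ k / (Nat.factorial k : ℝ) * PowerSeries.coeff (R := ℝ) r (PowerSeries.mk b * Aps ^ k) := by
    rw [Finset.sum_range_succ, last0, mul_zero, add_zero]
  rw [ext1]
  have swap : (∑ k ∈ Finset.range (r+1),
        X ^ k / (Nat.factorial k : ℝ) * PowerSeries.coeff (R := ℝ) r (PowerSeries.mk b * Aps ^ k))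
      = ∑ pq ∈ Finset.HasAntidiagonal.antidiagonal r, b pq.1 * gc X pq.2 := by
    have e : ∀ k ∈ Finset.range (r+1),
        X ^ k / (Nat.factorial k : ℝ) * PowerSeries.coeff (R := ℝ) r (PowerSeries.mk b * Aps ^ k)
        = ∑ pq ∈ Finset.HasAntidiagonal.antidiagonal r,
            b pq.1 * (X ^ k / (Nat.factorial k : ℝ) * PowerSeries.coeff (R := ℝ) pq.2 (Aps ^ k)) := by
      intro k _
      rw [PowerSeries.coeff_mul, Finset.mul_sum]
      refine Finset.sum_congr rfl fun pq _ => ?_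
      rw [PowerSeries.coeff_mk]
      ring
    rw [Finset.sum_congr rfl e, Finset.sum_comm]
    refine Finset.sum_congr rfl fun pq hpq => ?_
    rw [← Finset.mul_sum]
    congr 1
    have hle : pq.2 ≤ r := Finset.HasAntidiagonal.antidiagonal.snd_le hpq
    rw [← Psum X pq.2]
    refine (Finset.sum_subset (by intro x hx; rw [Finset.mem_range] at *; omega) ?_).symm
    intro k _ hk
    rw [Finset.mem_range] at hk
    rw [coeff_Aps_pow_eq_zero (by omega), mul_zero]
  rw [swap]
  -- evaluate
  have bval : ∀ pq ∈ Finset.HasAntidiagonal.antidiagonal r, b pq.1 * gc X pq.2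
      = gc s pq.1 / s * gc X pq.2 - (if pq.1 = 0 then gc s pq.1 / s * gc X pq.2 else 0) := by
    intro pq _
    simp only [hb]
    rw [b_eq s hs pq.1]
    split_ifs with h
    · simp
    · ring
  rw [Finset.sum_congr rfl bval, Finset.sum_sub_distrib]
  have second : (∑ pq ∈ Finset.HasAntidiagonal.antidiagonal r,
      (if pq.1 = 0 then gc s pq.1 / s * gc X pq.2 else 0)) = 1 / s * gc X r := by
    rw [Finset.sum_eq_single (0, r)]
    · simp [gc_zero]
    · intro pq hpq hne
      have hmem := Finset.HasAntidiagonal.mem_antidiagonal.mp hpq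
      have : pq.1 ≠ 0 := by
        intro h0
        apply hne
        have : pq.2 = r := by omega
        exact Prod.ext h0 this
      rw [if_neg this]
    · intro h
      exact absurd (Finset.HasAntidiagonal.mem_antidiagonal.mpr (by omega)) h
  have first : (∑ pq ∈ Finset.HasAntidiagonal.antidiagonal r, gc s pq.1 / s * gc X pq.2)
      = 1 / s * gc ((s:ℝ) + X) r := by
    rw [← gc_vandermonde (s:ℝ) X r, Finset.mul_sum]
    refine Finset.sum_congr rfl fun pq _ => by ring
  rw [first, second]
  have g1 : gchooseR (X + r + s - 1) r = gc (X + s) r := by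
    have : X + (r:ℝ) + s - 1 = (X + s) + r - 1 := by ring
    rw [this, gchooseR_eq_gc]
  have g2 : gchooseR (X + r - 1) r = gc X r := gchooseR_eq_gc X r
  have g3 : gc ((s:ℝ) + X) r = gc (X + s) r := by rw [add_comm]
  rw [g1, g2, g3]
  ring
end
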